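/- Let f, g : ℂ → ℂ be arbitrary functions and consider the non-autonomous quadratic Hamiltonian H(t, ξ₁, ξ₂, η₁, η₂) = f(t)·(ξ₂η₁ + g(t)·η₁² + η₂²/2). Then F₁ := 2ξ₂η₁ + η₂² and F₂ := η₁² satisfy: (a) for every t, {{F₁, H(t,·)}} = 0 and {{F₂, H(t,·)}} = 0 (so F₁, F₂ are first integrals of the Hamiltonian vector field of H); (b) {{F₁, F₂}} = 0; and (c) the gradients of F₁ and F₂ are linearly independent at every point with η₁ ≠ 0, hence on a dense open subset of ℂ⁴. -/

import Mathlib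

/-- Points `(ξ₁, ξ₂, η₁, η₂)` of `ℂ⁴`: coordinate `0` is `ξ₁`, `1` is `ξ₂`,
`2` is `η₁`, `3` is `η₂`. -/
abbrev V4 := Fin 4 → ℂ

/-- The partial derivative of `F : ℂ⁴ → ℂ` in the `i`-th coordinate direction. -/
noncomputable def pd (F : V4 → ℂ) (i : Fin 4) (p : V4) : ℂ :=
  fderiv ℂ F p (Pi.single i 1)

/-- The Poisson bracket
`{{F,G}} = Σᵢ₌₁² (∂F/∂ξᵢ·∂G/∂ηᵢ − ∂F/∂ηᵢ·∂G/∂ξᵢ)` of functions on `ℂ⁴`. -/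
noncomputable def pb (F G : V4 → ℂ) (p : V4) : ℂ :=
  pd F 0 p * pd G 2 p - pd F 2 p * pd G 0 p
    + pd F 1 p * pd G 3 p - pd F 3 p * pd G 1 p

/-- The gradient of `F : ℂ⁴ → ℂ`. -/
noncomputable def grad (F : V4 → ℂ) (p : V4) : V4 := fun i => pd F i p

noncomputable abbrev auxPr (i : Fin 4) : V4 →L[ℂ] ℂ := ContinuousLinearMap.proj i

lemma aux_hpr (p : V4) (i : Fin 4) : HasFDerivAt (fun p' : V4 => p' i) (auxPr i) p :=
  hasFDerivAt_apply (𝕜 := ℂ) (F' := fun _ => ℂ) i p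

lemma aux_pd_F1 (p : V4) (i : Fin 4) :
    pd (fun p' => 2 * (p' 1 * p' 2) + p' 3 ^ 2) i p
      = 2 * ((Pi.single i 1 : V4) 1 * p 2 + p 1 * (Pi.single i 1 : V4) 2)
        + 2 * p 3 * (Pi.single i 1 : V4) 3 := by
  have h : HasFDerivAt (fun p' : V4 => 2 * (p' 1 * p' 2) + p' 3 ^ 2)
      ((2:ℂ) • (p 1 • auxPr 2 + p 2 • auxPr 1) + (p 3 • auxPr 3 + p 3 • auxPr 3)) p := by
    have h1 := ((aux_hpr p 1).mul (aux_hpr p 2)).const_smul (2:ℂ)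
    have h2 := (aux_hpr p 3).mul (aux_hpr p 3)
    simpa [pow_two, smul_smul, mul_comm, Pi.mul_def, Pi.add_def, Pi.smul_def, smul_eq_mul] using h1.add h2
  rw [pd, h.fderiv]
  simp
  ring

lemma aux_pd_F2 (p : V4) (i : Fin 4) :
    pd (fun p' => p' 2 ^ 2) i p = 2 * p 2 * (Pi.single i 1 : V4) 2 := by
  have h : HasFDerivAt (fun p' : V4 => p' 2 ^ 2)
      (p 2 • auxPr 2 + p 2 • auxPr 2) p := by
    simpa [pow_two, mul_comm, Pi.mul_def] using (aux_hpr p 2).mul (aux_hpr p 2)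
  rw [pd, h.fderiv]
  simp
  ring

lemma aux_pd_H (c d : ℂ) (p : V4) (i : Fin 4) :
    pd (fun p' => c * (p' 1 * p' 2 + d * p' 2 ^ 2 + p' 3 ^ 2 / 2)) i p
      = c * (((Pi.single i 1 : V4) 1 * p 2 + p 1 * (Pi.single i 1 : V4) 2)
          + d * (2 * p 2 * (Pi.single i 1 : V4) 2)
          + p 3 * (Pi.single i 1 : V4) 3) := by
  have h : HasFDerivAt (fun p' : V4 => c * (p' 1 * p' 2 + d * p' 2 ^ 2 + p' 3 ^ 2 / 2))
      (c • ((p 1 • auxPr 2 + p 2 • auxPr 1)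
        + d • (p 2 • auxPr 2 + p 2 • auxPr 2)
        + (2:ℂ)⁻¹ • (p 3 • auxPr 3 + p 3 • auxPr 3))) p := by
    have h1 := (aux_hpr p 1).mul (aux_hpr p 2)
    have h2 := ((aux_hpr p 2).mul (aux_hpr p 2)).const_smul d
    have h3 := ((aux_hpr p 3).mul (aux_hpr p 3)).const_smul (2:ℂ)⁻¹
    have h4 := ((h1.add h2).add h3).const_smul c
    simpa [pow_two, smul_smul, mul_comm, smul_eq_mul, mul_assoc, div_eq_inv_mul, Pi.mul_def, Pi.add_def, Pi.smul_def] using h4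
  rw [pd, h.fderiv]
  simp
  ring

/-- For `H = f(t)·(ξ₂η₁ + g(t)·η₁² + η₂²/2)`, the functions `F₁ = 2ξ₂η₁ + η₂²` and
`F₂ = η₁²` are first integrals in involution, with gradients linearly independent
wherever `η₁ ≠ 0`, hence on a dense open subset of `ℂ⁴`. -/
theorem integrability_case_xi2eta1 (f g : ℂ → ℂ) :
    (∀ t : ℂ, ∀ p : V4,
        pb (fun p' => 2 * (p' 1 * p' 2) + p' 3 ^ 2)
           (fun p' => f t * (p' 1 * p' 2 + g t * p' 2 ^ 2 + p' 3 ^ 2 / 2)) p = 0 ∧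
        pb (fun p' => p' 2 ^ 2)
           (fun p' => f t * (p' 1 * p' 2 + g t * p' 2 ^ 2 + p' 3 ^ 2 / 2)) p = 0) ∧
    (∀ p : V4, pb (fun p' => 2 * (p' 1 * p' 2) + p' 3 ^ 2) (fun p' => p' 2 ^ 2) p = 0) ∧
    (∀ p : V4, p 2 ≠ 0 →
        LinearIndependent ℂ
          ![grad (fun p' => 2 * (p' 1 * p' 2) + p' 3 ^ 2) p, grad (fun p' => p' 2 ^ 2) p]) ∧
    (∃ s : Set V4, IsOpen s ∧ Dense s ∧ ∀ p ∈ s,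
        LinearIndependent ℂ
          ![grad (fun p' => 2 * (p' 1 * p' 2) + p' 3 ^ 2) p, grad (fun p' => p' 2 ^ 2) p]) := by
  have hli : ∀ p : V4, p 2 ≠ 0 →
      LinearIndependent ℂ
        ![grad (fun p' => 2 * (p' 1 * p' 2) + p' 3 ^ 2) p, grad (fun p' => p' 2 ^ 2) p] := by
    intro p hp
    rw [linearIndependent_fin2]
    constructor
    · intro h
      have := congrFun h 2
      norm_num [grad, aux_pd_F2, Pi.single_apply, Fin.ext_iff, show ((3:Fin 4):ℕ)=3 from rfl, show ((2:Fin 4):ℕ)=2 from rfl, show ((1:Fin 4):ℕ)=1 from rfl, show ((0:Fin 4):ℕ)=0 from rfl] at this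
      exact hp this
    · intro a h
      have := congrFun h 1
      norm_num [grad, aux_pd_F1, aux_pd_F2, Pi.smul_apply, smul_eq_mul, Pi.single_apply, Fin.ext_iff, show ((3:Fin 4):ℕ)=3 from rfl, show ((2:Fin 4):ℕ)=2 from rfl, show ((1:Fin 4):ℕ)=1 from rfl, show ((0:Fin 4):ℕ)=0 from rfl] at this
      exact hp this
  refine ⟨?_, ?_, hli, ?_⟩
  · intro t p
    refine ⟨?_, ?_⟩ <;>
    · simp only [pb, aux_pd_F1, aux_pd_F2, aux_pd_H]
      norm_num [Pi.single_apply, Fin.ext_iff, show ((3:Fin 4):ℕ)=3 from rfl, show ((2:Fin 4):ℕ)=2 from rfl, show ((1:Fin 4):ℕ)=1 from rfl, show ((0:Fin 4):ℕ)=0 from rfl]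
      try ring
  · intro p
    simp only [pb, aux_pd_F1, aux_pd_F2]
    norm_num [Pi.single_apply, Fin.ext_iff, show ((3:Fin 4):ℕ)=3 from rfl, show ((2:Fin 4):ℕ)=2 from rfl, show ((1:Fin 4):ℕ)=1 from rfl, show ((0:Fin 4):ℕ)=0 from rfl]
  · refine ⟨(fun p : V4 => p 2) ⁻¹' {0}ᶜ, ?_, ?_, fun p hp => hli p hp⟩
    · exact (continuous_apply 2).isOpen_preimage _ isOpen_compl_singleton
    · exact (dense_compl_singleton (0:ℂ)).preimage (isOpenMap_eval 2)
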